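/- Let m ≡ 1 (mod 6) with m ≥ 7 and n = 2^m - 1. The binary cyclic code C of length n whose defining set (with respect to a fixed primitive n-th root of unity) is T = { i : 1 ≤ i ≤ n-1, w₂(i) mod 6 ∈ {0,4,5} } has dimension 2^(m-1), and its minimum distance d satisfies d ≥ 2^((m-1)/2) + 3 if m ≡ 1 (mod 12), and d ≥ 2^((m-1)/2) + 1 if m ≡ 7 (mod 12). -/

import Mathlib

/-- binary digit sum -/
def w2 (i : ℕ) : ℕ := (Nat.digits 2 i).sum

lemma w2_zero : w2 0 = 0 := by simp [w2]

lemma w2_two_mul_add (k r : ℕ) (hr : r < 2) : w2 (2 * k + r) = w2 k + r := by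
  rcases Nat.eq_zero_or_pos (2 * k + r) with h | h
  · have hk : k = 0 := by omega
    have hr0 : r = 0 := by omega
    subst hk; subst hr0; simp [w2]
  · unfold w2
    rw [Nat.digits_def' (by norm_num : 1 < 2) h]
    simp only [List.sum_cons]
    have h1 : (2 * k + r) % 2 = r := by omega
    have h2 : (2 * k + r) / 2 = k := by omega
    rw [h1, h2]; ring

lemma w2_pow_mul_add (s x y : ℕ) (hy : y < 2 ^ s) :
    w2 (2 ^ s * x + y) = w2 x + w2 y := by
  induction s generalizing y with
  | zero => interval_cases y; simp [w2_zero]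
  | succ s ih =>
    have hsp : (0:ℕ) < 2 ^ s := Nat.pow_pos (by norm_num)
    have h1 : 2 ^ (s+1) * x + y = 2 * (2 ^ s * x + y / 2) + y % 2 := by
      have e : 2 ^ (s+1) * x = 2 * (2 ^ s * x) := by ring
      omega
    have h2 : y = 2 * (y / 2) + y % 2 := by omega
    rw [h1, w2_two_mul_add _ _ (Nat.mod_lt _ (by norm_num)),
      ih _ (by omega)]
    conv_rhs => rw [h2, w2_two_mul_add _ _ (Nat.mod_lt _ (by norm_num))]
    ring

lemma w2_compl (s x : ℕ) (hx : x < 2 ^ s) :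
    w2 (2 ^ s - 1 - x) + w2 x = s ∧ w2 x ≤ s := by
  induction s generalizing x with
  | zero => interval_cases x; simp [w2_zero]
  | succ s ih =>
    have hsp : (0:ℕ) < 2 ^ s := Nat.pow_pos (by norm_num)
    have hx2 : x / 2 < 2 ^ s := by omega
    obtain ⟨ih1, ih2⟩ := ih (x / 2) hx2
    have key : 2 ^ (s+1) - 1 - x = 2 * (2 ^ s - 1 - x / 2) + (1 - x % 2) := by
      rw [pow_succ] at *; omega
    have hx' : x = 2 * (x / 2) + x % 2 := by omega
    have e1 : w2 x = w2 (x / 2) + x % 2 := by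
      conv_lhs => rw [hx']
      exact w2_two_mul_add _ _ (by omega)
    rw [key, w2_two_mul_add _ _ (by omega), e1]
    omega

lemma w2_pos (x : ℕ) (hx : 0 < x) : 0 < w2 x := by
  induction x using Nat.strong_induction_on with
  | _ x ih =>
    have hx' : x = 2 * (x / 2) + x % 2 := by omega
    rcases Nat.eq_zero_or_pos (x % 2) with h | h
    · have h2 : 0 < x / 2 := by omega
      have := ih (x / 2) (by omega) h2
      conv_lhs => rw [show (0:ℕ) = 0 from rfl]
      rw [hx', w2_two_mul_add _ _ (by omega)]
      omega
    · rw [hx', w2_two_mul_add _ _ (by omega)]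
      omega

lemma w2_le (m x : ℕ) (hx : x < 2 ^ m) : w2 x ≤ m := (w2_compl m x hx).2

/-- weight of the complement -/
lemma w2_sub (m x : ℕ) (hx : x < 2 ^ m) : w2 (2 ^ m - 1 - x) = m - w2 x := by
  have := w2_compl m x hx
  omega


/-- key lemma: multiples of 2^s - 1 have weight s -/
lemma w2_mul_pred_pow (s a : ℕ) (ha : 1 ≤ a) (ha' : a ≤ 2 ^ s) :
    w2 (a * (2 ^ s - 1)) = s := by
  have hsp : (0:ℕ) < 2 ^ s := Nat.pow_pos (by norm_num)
  have key : a * (2 ^ s - 1) = 2 ^ s * (a - 1) + (2 ^ s - 1 - (a - 1)) := by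
    zify [show 1 ≤ a from ha, show (1:ℕ) ≤ 2 ^ s from hsp, show a - 1 ≤ 2 ^ s - 1 by omega]
    ring
  rw [key, w2_pow_mul_add _ _ _ (by omega), w2_sub s (a-1) (by omega)]
  have := w2_le s (a - 1) (by omega)
  omega

lemma w2_one : w2 1 = 1 := by
  have h := w2_two_mul_add 0 1 (by norm_num)
  norm_num [w2_zero] at h
  exact h

def cond6 (i : ℕ) : Prop := w2 i % 6 = 0 ∨ w2 i % 6 = 4 ∨ w2 i % 6 = 5

noncomputable instance : DecidablePred cond6 := fun _ => Classical.propDecidable _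

noncomputable def Tf (m : ℕ) : Finset ℕ := (Finset.Icc 1 (2 ^ m - 2)).filter cond6

lemma mem_Tf {m i : ℕ} : i ∈ Tf m ↔ (1 ≤ i ∧ i ≤ 2 ^ m - 2 ∧ cond6 i) := by
  simp [Tf, Finset.mem_filter, Finset.mem_Icc, and_assoc]

lemma card_Tf (m : ℕ) (hm : 1 ≤ m) (h6 : m % 6 = 1) :
    (Tf m).card = 2 ^ (m - 1) - 1 := by
  have hp : (2:ℕ) ^ m = 2 * 2 ^ (m - 1) := by
    conv_lhs => rw [show m = (m-1) + 1 by omega]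
    ring
  have hp1 : (2:ℕ) ≤ 2 ^ m := by have := Nat.pow_pos (n := m-1) (show 0 < 2 by norm_num); omega
  set n := 2 ^ m - 1 with hn
  have hiff : ∀ i, 1 ≤ i → i ≤ 2 ^ m - 2 → (cond6 i ↔ ¬ cond6 (n - i)) := by
    intro i h1 h2
    have hw : w2 (n - i) = m - w2 i := by
      rw [hn]; exact w2_sub m i (by omega)
    have hle : w2 i ≤ m := w2_le m i (by omega)
    unfold cond6
    rw [hw]
    omega
  have hcompl : ∀ i ∈ Finset.Icc 1 (2 ^ m - 2), n - i ∈ Finset.Icc 1 (2 ^ m - 2) := by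
    intro i hi; rw [Finset.mem_Icc] at *; omega
  have hbij : ((Finset.Icc 1 (2 ^ m - 2)).filter cond6).card
      = ((Finset.Icc 1 (2 ^ m - 2)).filter (fun i => ¬ cond6 i)).card := by
    apply Finset.card_bij' (fun i _ => n - i) (fun i _ => n - i)
    · intro i hi
      rw [Finset.mem_filter] at hi ⊢
      obtain ⟨hi1, hi2⟩ := hi
      rw [Finset.mem_Icc] at hi1
      refine ⟨hcompl i (Finset.mem_Icc.mpr hi1), ?_⟩
      exact (hiff i hi1.1 hi1.2).mp hi2
    · intro i hi
      rw [Finset.mem_filter] at hi ⊢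
      obtain ⟨hi1, hi2⟩ := hi
      rw [Finset.mem_Icc] at hi1
      refine ⟨hcompl i (Finset.mem_Icc.mpr hi1), ?_⟩
      have h2 := hiff (n - i) (by omega) (by omega)
      have he : n - (n - i) = i := by omega
      rw [he] at h2
      exact h2.mpr hi2
    · intro i hi
      rw [Finset.mem_filter, Finset.mem_Icc] at hi
      omega
    · intro i hi
      rw [Finset.mem_filter, Finset.mem_Icc] at hi
      omega
  have hsum := Finset.card_filter_add_card_filter_not
    (s := Finset.Icc 1 (2 ^ m - 2)) (p := cond6)
  have hcard : (Finset.Icc 1 (2 ^ m - 2)).card = 2 ^ m - 2 := by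
    rw [Nat.card_Icc]; omega
  rw [hcard] at hsum
  unfold Tf
  omega

lemma dbl_mem_Tf (m : ℕ) (hm : 1 ≤ m) {j : ℕ} (hj : j ∈ Tf m) :
    (2 * j) % (2 ^ m - 1) ∈ Tf m := by
  have hp : (2:ℕ) ^ m = 2 * 2 ^ (m - 1) := by
    conv_lhs => rw [show m = (m-1) + 1 by omega]
    ring
  have hp0 : (0:ℕ) < 2 ^ (m-1) := Nat.pow_pos (by norm_num)
  rw [mem_Tf] at hj ⊢
  obtain ⟨h1, h2, h3⟩ := hj
  rcases le_or_gt (2 * j) (2 ^ m - 2) with h | h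
  · rw [Nat.mod_eq_of_lt (by omega)]
    have : w2 (2 * j) = w2 j := by
      have := w2_two_mul_add j 0 (by norm_num)
      simpa using this
    exact ⟨by omega, h, by unfold cond6 at *; rw [this]; exact h3⟩
  · have hmod : (2 * j) % (2 ^ m - 1) = 2 * j - (2 ^ m - 1) := by
      rw [Nat.mod_eq_sub_mod (by omega), Nat.mod_eq_of_lt (by omega)]
    have hsplit : j = 2 ^ (m-1) * 1 + (j - 2 ^ (m-1)) := by omega
    have hwj : w2 j = w2 1 + w2 (j - 2 ^ (m-1)) := by
      conv_lhs => rw [hsplit]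
      exact w2_pow_mul_add _ _ _ (by omega)
    have hw1 : w2 1 = 1 := by
      have := w2_two_mul_add 0 1 (by norm_num)
      norm_num [w2_zero] at this
      exact this
    have hval : 2 * j - (2 ^ m - 1) = 2 * (j - 2 ^ (m-1)) + 1 := by omega
    have hw' : w2 (2 * j - (2 ^ m - 1)) = w2 (j - 2 ^ (m-1)) + 1 := by
      rw [hval]; exact w2_two_mul_add _ _ (by norm_num)
    rw [hmod]
    refine ⟨by omega, by omega, ?_⟩
    unfold cond6 at *
    omega


/-- The binary cyclic code of length `n` with defining set `T` (with respect to the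
`n`-th root of unity `α`), realized as a subspace of `Fin n → ZMod 2`: the kernel of the
evaluation maps `c ↦ ∑ i, c i • α ^ (i * j)` for `j ∈ T`. -/
noncomputable def cyclicCodeSubmodule (n : ℕ) (K : Type*) [Field K]
    [Algebra (ZMod 2) K] (α : K) (T : Set ℕ) :
    Submodule (ZMod 2) (Fin n → ZMod 2) :=
  ⨅ j ∈ T, LinearMap.ker
    (∑ i : Fin n, α ^ (i.val * j) •
      ((Algebra.linearMap (ZMod 2) K).comp (LinearMap.proj i)))

open Polynomial

lemma mem_cyclicCode_iff {n : ℕ} {K : Type*} [Field K] [Algebra (ZMod 2) K]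
    (α : K) (T : Set ℕ) (c : Fin n → ZMod 2) :
    c ∈ cyclicCodeSubmodule n K α T ↔
      ∀ j ∈ T, ∑ i : Fin n, algebraMap (ZMod 2) K (c i) * α ^ (i.val * j) = 0 := by
  unfold cyclicCodeSubmodule
  simp only [Submodule.mem_iInf, LinearMap.mem_ker, LinearMap.sum_apply, LinearMap.smul_apply,
    LinearMap.comp_apply, LinearMap.proj_apply, Algebra.linearMap_apply, smul_eq_mul]
  constructor <;> intro h j hj <;> rw [← h j hj] <;>
    exact Finset.sum_congr rfl (fun i _ => mul_comm _ _)

lemma heval_aux {n : ℕ} {K : Type*} [Field K] [Algebra (ZMod 2) K] (α : K)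
    (p : (ZMod 2)[X]) (hp : p.natDegree < n) (j : ℕ) :
    ∑ i : Fin n, algebraMap (ZMod 2) K (p.coeff i) * α ^ (i.val * j) = aeval (α ^ j) p := by
  rw [Polynomial.aeval_eq_sum_range' hp, ← Fin.sum_univ_eq_sum_range]
  apply Finset.sum_congr rfl
  intro i _
  rw [Algebra.smul_def, ← pow_mul, mul_comm j i.val]

theorem finrank_cyclicCode (n : ℕ) (hn : 0 < n) (hodd : ¬ 2 ∣ n) (K : Type*) [Field K]
    [Algebra (ZMod 2) K] (α : K) (hα : IsPrimitiveRoot α n) (T : Finset ℕ)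
    (hTn : ∀ j ∈ T, j < n) (hdbl : ∀ j ∈ T, (2 * j) % n ∈ T) :
    Module.finrank (ZMod 2) (cyclicCodeSubmodule n K α ↑T) = n - T.card := by
  classical
  have hinj : Function.Injective (algebraMap (ZMod 2) K) := (algebraMap (ZMod 2) K).injective
  haveI : CharP K 2 := charP_of_injective_algebraMap hinj 2
  haveI : Fact (Nat.Prime 2) := ⟨Nat.prime_two⟩
  haveI : ExpChar K 2 := ExpChar.prime Nat.prime_two
  set g : K[X] := ∏ j ∈ T, (X - C (α ^ j)) with hg
  have hgmonic : g.Monic := monic_prod_of_monic _ _ fun j _ => monic_X_sub_C _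
  have hgdeg : g.natDegree = T.card := by
    rw [hg, natDegree_prod]
    · simp only [natDegree_X_sub_C]
      rw [Finset.sum_const, smul_eq_mul, mul_one]
    · intro j _; exact X_sub_C_ne_zero _
  -- Frobenius invariance of g
  have hmap : g.map (frobenius K 2) = g := by
    rw [hg, Polynomial.map_prod]
    have hterm : ∀ j ∈ T, (X - C (α ^ j)).map (frobenius K 2) = X - C (α ^ ((2 * j) % n)) := by
      intro j hj
      rw [Polynomial.map_sub, map_X, map_C]
      congr 1
      rw [frobenius_def, ← pow_mul]
      have hsplit : j * 2 = n * (2 * j / n) + 2 * j % n := by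
        rw [mul_comm]; exact (Nat.div_add_mod _ _).symm
      rw [hsplit, pow_add, pow_mul, hα.pow_eq_one, one_pow, one_mul]
    rw [Finset.prod_congr rfl hterm]
    have hinjOn : Set.InjOn (fun j => (2 * j) % n) ↑T := by
      intro j hj j' hj' hje
      have h1 : (2 * j) % n = (2 * j') % n := hje
      have hcop : Nat.Coprime 2 n := (Nat.Prime.coprime_iff_not_dvd Nat.prime_two).mpr hodd
      have h2 : j % n = j' % n := Nat.ModEq.cancel_left_of_coprime hcop.symm h1
      rwa [Nat.mod_eq_of_lt (hTn j hj), Nat.mod_eq_of_lt (hTn j' hj')] at h2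
    have himg : T.image (fun j => (2 * j) % n) = T := by
      apply Finset.eq_of_subset_of_card_le
      · intro x hx
        rw [Finset.mem_image] at hx
        obtain ⟨j, hj, rfl⟩ := hx
        exact hdbl j hj
      · rw [Finset.card_image_of_injOn hinjOn]
    conv_rhs => rw [← himg]
    rw [Finset.prod_image (fun j hj j' hj' => hinjOn hj hj')]
  -- lift g to ZMod 2
  have hcoeff : ∀ k, g.coeff k ∈ Set.range (algebraMap (ZMod 2) K) := by
    intro k
    have h2 : (g.coeff k) ^ 2 = g.coeff k := by
      conv_rhs => rw [← hmap]
      rw [coeff_map, frobenius_def]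
    have h3 : g.coeff k = 0 ∨ g.coeff k = 1 := by
      have h4 : g.coeff k * (g.coeff k - 1) = 0 := by ring_nf; linear_combination h2
      rcases mul_eq_zero.mp h4 with h | h
      · exact Or.inl h
      · exact Or.inr (sub_eq_zero.mp h)
    rcases h3 with h | h
    · exact ⟨0, by simp [h]⟩
    · exact ⟨1, by simp [h]⟩
  obtain ⟨g₀, hg₀map, hg₀deg, hg₀monic⟩ :=
    lifts_and_degree_eq_and_monic ((lifts_iff_coeff_lifts g).mpr hcoeff) hgmonic
  have hg₀deg' : g₀.natDegree = T.card := by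
    rw [← hgdeg]; exact natDegree_eq_of_degree_eq hg₀deg
  have hcard : T.card ≤ n := by
    have hsub : T ⊆ Finset.range n := fun j hj => Finset.mem_range.mpr (hTn j hj)
    simpa using Finset.card_le_card hsub
  set k := n - T.card with hk
  have hg₀ne : g₀ ≠ 0 := hg₀monic.ne_zero
  have hmuldeg : ∀ q : (ZMod 2)[X], q ≠ 0 → q ∈ degreeLT (ZMod 2) k →
      (g₀ * q).natDegree < n := by
    intro q hq hqlt
    rw [mem_degreeLT, ← natDegree_lt_iff_degree_lt hq] at hqlt
    rw [natDegree_mul hg₀ne hq, hg₀deg']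
    omega
  have hmuldeg' : ∀ q : (ZMod 2)[X], q ∈ degreeLT (ZMod 2) k → (g₀ * q).natDegree < n := by
    intro q hqlt
    rcases eq_or_ne q 0 with rfl | hq
    · simpa using hn
    · exact hmuldeg q hq hqlt
  -- the linear map
  let Ψ : degreeLT (ZMod 2) k →ₗ[ZMod 2] (Fin n → ZMod 2) :=
    { toFun := fun q i => (g₀ * (q : (ZMod 2)[X])).coeff i
      map_add' := by
        intro q q'
        funext i
        simp [mul_add, coeff_add]
      map_smul' := by
        intro a q
        funext i
        simp [mul_smul_comm, coeff_smul] }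
  have hΨapp : ∀ (q : degreeLT (ZMod 2) k) (i : Fin n),
      Ψ q i = (g₀ * (q : (ZMod 2)[X])).coeff i := fun _ _ => rfl
  -- aeval of g₀ at α^j vanishes for j ∈ T
  have hg₀root : ∀ j ∈ T, aeval (α ^ j) g₀ = 0 := by
    intro j hj
    rw [aeval_def, ← eval_map, hg₀map, hg, eval_prod]
    apply Finset.prod_eq_zero hj
    simp
  -- range Ψ = code
  have hrange : LinearMap.range Ψ = cyclicCodeSubmodule n K α ↑T := by
    apply le_antisymm
    · rintro _ ⟨q, rfl⟩
      rw [mem_cyclicCode_iff]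
      intro j hj
      have hsum : ∀ i : Fin n, Ψ q i = (g₀ * (q : (ZMod 2)[X])).coeff i := fun i => rfl
      calc ∑ i : Fin n, algebraMap (ZMod 2) K (Ψ q i) * α ^ (i.val * j)
          = ∑ i : Fin n, algebraMap (ZMod 2) K ((g₀ * (q : (ZMod 2)[X])).coeff i)
              * α ^ (i.val * j) := by
            exact Finset.sum_congr rfl (fun i _ => by rw [hsum])
        _ = aeval (α ^ j) (g₀ * (q : (ZMod 2)[X])) :=
            heval_aux α _ (hmuldeg' _ q.2) j
        _ = 0 := by rw [map_mul, hg₀root j hj, zero_mul]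
    · intro c hc
      rw [mem_cyclicCode_iff] at hc
      set p : (ZMod 2)[X] := ∑ i : Fin n, Polynomial.monomial i.val (c i) with hp
      have hpmem : p ∈ degreeLT (ZMod 2) n := by
        apply Submodule.sum_mem
        intro i _
        apply mem_degreeLT.mpr
        exact lt_of_le_of_lt (degree_monomial_le _ _) (by exact_mod_cast i.isLt)
      have hpcoeff : ∀ i : Fin n, p.coeff i.val = c i := by
        intro i
        rw [hp, finset_sum_coeff]
        rw [Finset.sum_eq_single i]
        · rw [coeff_monomial, if_pos rfl]
        · intro j _ hji
          rw [coeff_monomial, if_neg (by simpa [Fin.ext_iff] using hji)]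
        · intro hmem
          exact absurd (Finset.mem_univ i) hmem
      have hpdeg : p.natDegree < n := by
        rcases eq_or_ne p 0 with h | h
        · simpa [h] using hn
        · exact (natDegree_lt_iff_degree_lt h).mpr (mem_degreeLT.mp hpmem)
      have hroots : ∀ j ∈ T, aeval (α ^ j) p = 0 := by
        intro j hj
        rw [← heval_aux α p hpdeg j]
        rw [← hc j hj]
        exact Finset.sum_congr rfl (fun i _ => by rw [hpcoeff])
      have hdvd : g₀ ∣ p := by
        rw [← Polynomial.map_dvd_map (algebraMap (ZMod 2) K) hinj hg₀monic, hg₀map, hg]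
        apply Finset.prod_dvd_of_coprime
        · intro j hj j' hj' hne
          apply isCoprime_X_sub_C_of_isUnit_sub
          apply IsUnit.mk0
          apply sub_ne_zero_of_ne
          intro he
          exact hne (hα.pow_inj (hTn j hj) (hTn j' hj') he)
        · intro j hj
          rw [dvd_iff_isRoot, IsRoot, eval_map, ← aeval_def]
          exact hroots j hj
      obtain ⟨q, hq⟩ := hdvd
      have hqmem : q ∈ degreeLT (ZMod 2) k := by
        rw [mem_degreeLT]
        rcases eq_or_ne q 0 with rfl | hq0
        · simp only [degree_zero]
          exact WithBot.bot_lt_coe _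
        · have hp0 : p ≠ 0 := by
            intro h0
            rw [h0] at hq
            exact hg₀ne (by rcases mul_eq_zero.mp hq.symm with h | h; exact h; exact absurd h hq0)
          rw [← natDegree_lt_iff_degree_lt hq0]
          have hnd := natDegree_mul hg₀ne hq0
          rw [← hq, hg₀deg'] at hnd
          omega
      refine ⟨⟨q, hqmem⟩, ?_⟩
      funext i
      show (g₀ * q).coeff i = c i
      rw [← hq]
      exact hpcoeff i
  -- injectivity
  have hker : Function.Injective Ψ := by
    rw [← LinearMap.ker_eq_bot]
    rw [Submodule.eq_bot_iff]
    rintro ⟨q, hqmem⟩ hq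
    rcases eq_or_ne q 0 with rfl | hq0
    · rfl
    · exfalso
      apply hq0
      have h1 : g₀ * q = 0 := by
        ext i'
        rcases lt_or_ge i' n with hi | hi
        · have := congrFun (show Ψ ⟨q, hqmem⟩ = 0 from hq) ⟨i', hi⟩
          simpa [hΨapp] using this
        · rw [coeff_zero]
          exact coeff_eq_zero_of_natDegree_lt (lt_of_lt_of_le (hmuldeg q hq0 hqmem) hi)
      rcases mul_eq_zero.mp h1 with h | h
      · exact absurd h hg₀ne
      · exact h
  -- conclude
  rw [← hrange]
  rw [LinearMap.finrank_range_of_inj hker]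
  have := (Polynomial.degreeLTEquiv (ZMod 2) k).finrank_eq
  rw [this]
  simp [hk]

/-- The Hamming weight of a binary word. -/
def wt {n : ℕ} (c : Fin n → ZMod 2) : ℕ :=
  (Finset.univ.filter fun i => c i ≠ 0).card

lemma bch_bound (n : ℕ) (hn : 0 < n) {K : Type*} [Field K] [Algebra (ZMod 2) K] (α : K)
    (hα : IsPrimitiveRoot α n) (T : Set ℕ) (v L : ℕ) (hv : Nat.Coprime v n)
    (hrun : ∀ a, 1 ≤ a → a ≤ L → a * v ∈ T)
    (c : Fin n → ZMod 2) (hc : c ∈ cyclicCodeSubmodule n K α T) (hc0 : c ≠ 0) :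
    L + 1 ≤ wt c := by
  classical
  by_contra hcon
  push_neg at hcon
  rw [mem_cyclicCode_iff] at hc
  set β := α ^ v with hβdef
  have hβ : IsPrimitiveRoot β n := hα.pow_of_coprime v hv
  have hβ0 : β ≠ 0 := hβ.ne_zero hn.ne'
  set S : Finset (Fin n) := Finset.univ.filter (fun i => c i ≠ 0) with hS
  have hScard : S.card = wt c := rfl
  set e := S.equivFin with he
  set u : Fin S.card → K := fun r => β ^ ((e.symm r : Fin n) : ℕ) with hu
  have huinj : Function.Injective u := by
    intro r r' hrr
    have hval := hβ.pow_inj (e.symm r : Fin n).isLt (e.symm r' : Fin n).isLt hrr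
    exact e.symm.injective (Subtype.ext (Fin.ext hval))
  have hu0 : ∀ r, u r ≠ 0 := fun r => pow_ne_zero _ hβ0
  set x : Fin S.card → K := fun r => algebraMap (ZMod 2) K (c (e.symm r)) * u r with hx
  have hrow : ∀ jj : Fin S.card, ∑ r, u r ^ (jj : ℕ) * x r = 0 := by
    intro jj
    have hjL : (jj : ℕ) + 1 ≤ L := by
      have h1 := jj.isLt
      omega
    have h0 := hc _ (hrun ((jj : ℕ) + 1) (by omega) hjL)
    have hterm : ∀ i : Fin n, algebraMap (ZMod 2) K (c i) * α ^ (i.val * (((jj : ℕ) + 1) * v))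
        = algebraMap (ZMod 2) K (c i) * (β ^ (i : ℕ)) ^ ((jj : ℕ) + 1) := by
      intro i
      congr 1
      rw [hβdef, ← pow_mul, ← pow_mul]
      congr 1
      ring
    rw [Finset.sum_congr rfl (fun i _ => hterm i)] at h0
    have hfil : ∑ i ∈ S, algebraMap (ZMod 2) K (c i) * (β ^ (i : ℕ)) ^ ((jj : ℕ) + 1)
        = ∑ i : Fin n, algebraMap (ZMod 2) K (c i) * (β ^ (i : ℕ)) ^ ((jj : ℕ) + 1) := by
      apply Finset.sum_filter_of_ne
      intro i _ hne
      intro hci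
      exact hne (by rw [hci, map_zero, zero_mul])
    have hsum : ∑ r, u r ^ (jj : ℕ) * x r
        = ∑ i ∈ S, algebraMap (ZMod 2) K (c i) * (β ^ (i : ℕ)) ^ ((jj : ℕ) + 1) := by
      rw [← Finset.sum_coe_sort S]
      rw [← e.symm.sum_comp (fun s => algebraMap (ZMod 2) K (c s)
        * (β ^ ((s : Fin n) : ℕ)) ^ ((jj : ℕ) + 1))]
      apply Finset.sum_congr rfl
      intro r _
      rw [hx, hu]
      rw [pow_succ]
      ring
    rw [hsum, hfil]
    exact h0
  have hxz : x = 0 := by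
    apply Matrix.eq_zero_of_mulVec_eq_zero
      (M := (Matrix.vandermonde u).transpose)
      (by rw [Matrix.det_transpose]; exact Matrix.det_vandermonde_ne_zero_iff.mpr huinj)
    funext jj
    simp only [Matrix.mulVec, Matrix.transpose_apply, Matrix.vandermonde_apply,
      dotProduct, Pi.zero_apply]
    exact hrow jj
  obtain ⟨i, hi⟩ : ∃ i, c i ≠ 0 := by
    by_contra hall
    push_neg at hall
    exact hc0 (funext hall)
  have himem : i ∈ S := by rw [hS]; simp [hi]
  have := congrFun hxz (e ⟨i, himem⟩)
  rw [hx] at this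
  simp only [Equiv.symm_apply_apply, Pi.zero_apply] at this
  rcases mul_eq_zero.mp this with h | h
  · exact hi (by
      have : (algebraMap (ZMod 2) K) (c i) = 0 := h
      exact (map_eq_zero_iff _ ((algebraMap (ZMod 2) K).injective)).mp this)
  · exact hu0 _ h

theorem duadic_code_parameters (m : ℕ) (hm : 7 ≤ m) (h : m % 6 = 1)
    (K : Type*) [Field K] [Algebra (ZMod 2) K] (α : K)
    (hα : IsPrimitiveRoot α (2 ^ m - 1)) :
    let n := 2 ^ m - 1
    let T : Set ℕ := {i | 1 ≤ i ∧ i ≤ n - 1 ∧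
      ((Nat.digits 2 i).sum % 6 = 0 ∨ (Nat.digits 2 i).sum % 6 = 4 ∨
        (Nat.digits 2 i).sum % 6 = 5)}
    Module.finrank (ZMod 2) (cyclicCodeSubmodule n K α T) = 2 ^ (m - 1) ∧
    ∀ c ∈ cyclicCodeSubmodule n K α T, c ≠ 0 →
      (m % 12 = 1 → 2 ^ ((m - 1) / 2) + 3 ≤ wt c) ∧
      (m % 12 = 7 → 2 ^ ((m - 1) / 2) + 1 ≤ wt c) := by
  intro n T
  have hmm : (2:ℕ) ^ m = 2 * 2 ^ (m - 1) := by
    conv_lhs => rw [show m = (m-1) + 1 by omega]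
    ring
  have hm1pos : (0:ℕ) < 2 ^ (m-1) := Nat.pow_pos (by norm_num)
  have h64 : (64:ℕ) ≤ 2 ^ (m-1) := by
    calc (64:ℕ) = 2 ^ 6 := by norm_num
    _ ≤ 2 ^ (m-1) := Nat.pow_le_pow_right (by norm_num) (by omega)
  have hn1 : n = 2 ^ m - 1 := rfl
  have hnpos : 0 < n := by omega
  have hTeq : T = (↑(Tf m) : Set ℕ) := by
    ext i
    simp only [Set.mem_setOf_eq, Finset.mem_coe, mem_Tf, cond6, w2]
    constructor
    · rintro ⟨h1, h2, h3⟩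
      exact ⟨h1, by omega, h3⟩
    · rintro ⟨h1, h2, h3⟩
      exact ⟨h1, by omega, h3⟩
  constructor
  · rw [hTeq, finrank_cyclicCode n hnpos (by omega) K α hα (Tf m)
      (fun j hj => by have := mem_Tf.mp hj; omega)
      (fun j hj => dbl_mem_Tf m (by omega) hj),
      card_Tf m (by omega) h]
    omega
  · intro c hc hc0
    have hgen1 : ∀ X : ℕ, 2 ≤ X → 2 * (X * X) - 1 = (X - 1) * (X * 2 + 2) + 1 := by
      intro X hX
      zify [show 1 ≤ X by omega, show 1 ≤ 2 * (X * X) by nlinarith]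
      ring
    have hgen2 : ∀ X : ℕ, 2 ≤ X → (X + 2) * (X - 1) + 2 = X * X + X := by
      intro X hX
      zify [show 1 ≤ X by omega]
      ring
    have hgen3 : ∀ X : ℕ, 2 ≤ X → (X + 1) * (X - 1) = X * X - 1 := by
      intro X hX
      zify [show 1 ≤ X by omega, show 1 ≤ X * X by nlinarith]
      ring
    have hgen4 : ∀ X : ℕ, 2 ≤ X → (X + 2) * (X - 1) = X * X + (X - 2) := by
      intro X hX
      zify [show 1 ≤ X by omega, show 2 ≤ X by omega]
      ring
    have hgen5 : ∀ Y : ℕ, 1 ≤ Y → Y * (2 * Y) - 1 = (2 * Y - 1) * Y + (Y - 1) := by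
      intro Y hY
      zify [show 1 ≤ 2 * Y by omega, show 1 ≤ Y * (2 * Y) by nlinarith, hY]
      ring
    have hgen6 : ∀ Y : ℕ, 1 ≤ Y → Y * (2 * Y - 1) + Y = 2 * (Y * Y) := by
      intro Y hY
      zify [show 1 ≤ 2 * Y by omega]
      ring
    constructor
    · -- m % 12 = 1
      intro h12
      obtain ⟨q, hq⟩ : ∃ q, m = 12 * q + 1 := ⟨m / 12, by omega⟩
      set s : ℕ := 6 * q with hs
      have hq1 : 1 ≤ q := by omega
      have hXpos : (64:ℕ) ≤ 2 ^ s := by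
        calc (64:ℕ) = 2 ^ 6 := by norm_num
        _ ≤ 2 ^ s := Nat.pow_le_pow_right (by norm_num) (by omega)
      have hpowm : (2:ℕ) ^ m = 2 * (2 ^ s * 2 ^ s) := by
        rw [show m = s + s + 1 by omega, pow_add, pow_add, pow_one]
        ring
      have hident : n = (2 ^ s - 1) * (2 ^ s * 2 + 2) + 1 := by
        rw [hn1, hpowm]
        exact hgen1 _ (by omega)
      have hcop : Nat.Coprime (2 ^ s - 1) n := by
        have hmod : n % (2 ^ s - 1) = 1 := by
          rw [hident, Nat.mul_add_mod]
          exact Nat.mod_eq_of_lt (by omega)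
        unfold Nat.Coprime
        rw [Nat.gcd_rec _ n, hmod, Nat.gcd_one_left]
      have hrun : ∀ a, 1 ≤ a → a ≤ 2 ^ s + 2 → a * (2 ^ s - 1) ∈ T := by
        intro a ha1 haL
        rw [hTeq]
        have h1 : a * (2 ^ s - 1) ≤ (2 ^ s + 2) * (2 ^ s - 1) :=
          Nat.mul_le_mul_right _ haL
        have h2 : (2 ^ s + 2) * (2 ^ s - 1) + 2 = 2 ^ s * 2 ^ s + 2 ^ s :=
          hgen2 _ (by omega)
        have hle2 : (2:ℕ) ^ s ≤ 2 ^ s * 2 ^ s := Nat.le_mul_of_pos_right _ (by positivity)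
        have hbound : a * (2 ^ s - 1) ≤ 2 ^ m - 2 := by omega
        have h1av : 1 ≤ a * (2 ^ s - 1) := by
          have := Nat.mul_le_mul ha1 (show 1 ≤ 2 ^ s - 1 by omega)
          omega
        have hw : w2 (a * (2 ^ s - 1)) % 6 = 0 := by
          rcases le_or_gt a (2 ^ s) with hle | hgt
          · rw [w2_mul_pred_pow s a ha1 hle]
            omega
          · rcases (by omega : a = 2 ^ s + 1 ∨ a = 2 ^ s + 2) with rfl | rfl
            · have hval : (2 ^ s + 1) * (2 ^ s - 1) = 2 ^ (2 * s) - 1 := by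
                rw [two_mul, pow_add]
                exact hgen3 _ (by omega)
              have hws := w2_sub (2 * s) 0 (by positivity)
              rw [Nat.sub_zero, w2_zero] at hws
              rw [hval, hws]
              omega
            · have hval : (2 ^ s + 2) * (2 ^ s - 1) = 2 ^ s * 2 ^ s + (2 ^ s - 2) := by
                exact hgen4 _ (by omega)
              have hsub2 : (2:ℕ) ^ s - 2 = 2 ^ s - 1 - 1 := by omega
              have hws : w2 (2 ^ s) = 1 := by
                have h0 := w2_pow_mul_add s 1 0 (by omega)
                rw [mul_one, add_zero, w2_zero, w2_one] at h0
                omega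
              rw [hval, w2_pow_mul_add s (2 ^ s) (2 ^ s - 2) (by omega), hsub2,
                w2_sub s 1 (by omega), w2_one, hws]
              omega
        exact Finset.mem_coe.mpr (mem_Tf.mpr ⟨h1av, by omega, Or.inl hw⟩)
      have hb := bch_bound n hnpos α hα T (2 ^ s - 1) (2 ^ s + 2) hcop hrun c hc hc0
      have hexp : (m - 1) / 2 = s := by omega
      rw [hexp]
      omega
    · -- m % 12 = 7
      intro h12
      obtain ⟨q, hq⟩ : ∃ q, m = 12 * q + 7 := ⟨m / 12, by omega⟩
      set s : ℕ := 6 * q + 4 with hs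
      have hYpos : (4:ℕ) ≤ 2 ^ (s - 1) := by
        calc (4:ℕ) = 2 ^ 2 := by norm_num
        _ ≤ 2 ^ (s - 1) := Nat.pow_le_pow_right (by norm_num) (by omega)
      have hpows : (2:ℕ) ^ s = 2 * 2 ^ (s - 1) := by
        conv_lhs => rw [show s = (s - 1) + 1 by omega]
        ring
      have hpowm : (2:ℕ) ^ m = 2 ^ (s - 1) * (2 * 2 ^ (s - 1)) := by
        rw [show m = (s - 1) + s by omega, pow_add, hpows]
      have hident : n = (2 ^ s - 1) * 2 ^ (s - 1) + (2 ^ (s - 1) - 1) := by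
        rw [hn1, hpowm, hpows]
        exact hgen5 _ (by omega)
      have hcop : Nat.Coprime (2 ^ s - 1) n := by
        have hmod1 : n % (2 ^ s - 1) = 2 ^ (s - 1) - 1 := by
          rw [hident, Nat.mul_add_mod]
          exact Nat.mod_eq_of_lt (by omega)
        have hident2 : 2 ^ s - 1 = (2 ^ (s - 1) - 1) * 2 + 1 := by
          rw [hpows]; omega
        have hmod2 : (2 ^ s - 1) % (2 ^ (s - 1) - 1) = 1 := by
          rw [hident2, Nat.mul_add_mod]
          exact Nat.mod_eq_of_lt (by omega)
        unfold Nat.Coprime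
        rw [Nat.gcd_rec _ n, hmod1, Nat.gcd_rec _ _, hmod2, Nat.gcd_one_left]
      have hrun : ∀ a, 1 ≤ a → a ≤ 2 ^ (s - 1) → a * (2 ^ s - 1) ∈ T := by
        intro a ha1 haL
        rw [hTeq]
        have h1 : a * (2 ^ s - 1) ≤ 2 ^ (s - 1) * (2 ^ s - 1) :=
          Nat.mul_le_mul_right _ haL
        have h2 : 2 ^ (s - 1) * (2 ^ s - 1) + 2 ^ (s - 1) = 2 * (2 ^ (s - 1) * 2 ^ (s - 1)) := by
          rw [hpows]
          exact hgen6 _ (by omega)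
        have hm2 : (2:ℕ) ^ m = 2 * (2 ^ (s - 1) * 2 ^ (s - 1)) := by
          rw [hpowm]; ring
        have hbound : a * (2 ^ s - 1) ≤ 2 ^ m - 2 := by omega
        have h1av : 1 ≤ a * (2 ^ s - 1) := by
          have := Nat.mul_le_mul ha1 (show 1 ≤ 2 ^ s - 1 by omega)
          omega
        have hw : w2 (a * (2 ^ s - 1)) % 6 = 4 := by
          rw [w2_mul_pred_pow s a ha1 (by omega)]
          omega
        exact Finset.mem_coe.mpr (mem_Tf.mpr ⟨h1av, by omega, Or.inr (Or.inl hw)⟩)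
      have hb := bch_bound n hnpos α hα T (2 ^ s - 1) (2 ^ (s - 1)) hcop hrun c hc hc0
      have hexp : (m - 1) / 2 = s - 1 := by omega
      rw [hexp]
      omega
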